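/- arXiv:2501.13605 — 8 statements merged into one kernel-verified Lean document; each statement's English description precedes it below -/
import Mathlib

section
/- For any integer n ≥ 9, if p is the largest prime such that p² ≤ n, then p³ > n. -/
theorem stmt_0 (n p : ℕ) (hn : 9 ≤ n) (hp : p.Prime) (hp2 : p ^ 2 ≤ n)
    (hmax : ∀ q : ℕ, q.Prime → q ^ 2 ≤ n → q ≤ p) : n < p ^ 3 := by
  by_contra h
  push_neg at h
  have hp2' := hp.two_le
  rcases Nat.lt_or_ge p 5 with h5 | h5
  · interval_cases p
    · have := hmax 3 (by norm_num) (by omega); omega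
    · have := hmax 5 (by norm_num) (by nlinarith); omega
    · exact absurd hp (by norm_num)
  · obtain ⟨q, hq, hpq, hq2⟩ := Nat.exists_prime_lt_and_le_two_mul p (by omega)
    have : q ^ 2 ≤ n := by nlinarith
    have := hmax q hq this
    omega
end

section
/- For any integer n ≥ 9, if p is the largest prime such that p² ≤ n, then the integer quotient n / p² equals 1 or 2. -/
/-!
Since `p` is the largest prime with `p² ≤ n`, it suffices to find a prime `q > p` with
`q² ≤ 3p²`, for then `p² ≤ n < q² ≤ 3p²`. For `p ≥ 7` any prime in `(2m, 3m]` with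
`m = (p + 1) / 2` will do, and for every `m ≥ 1` that interval contains a prime (El Bachraoui).

The latter is proved like Erdős's proof of Bertrand's postulate, with `C(3m, m)` in place of the
central binomial coefficient: `C(3m, m) ≥ 27^m / (4^m (3m + 1))`. If `(2m, 3m]` has no prime,
then by Kummer's theorem every prime above `3m/5` and `√(3m)` that divides `C(3m, m)` divides
`C(m + m/2, m/2) ≤ 3^(m + m/2) / 2^m`, the primes in `(√(3m), 3m/5]` contribute at most
`4^(3m/5)` and the smaller ones at most `(3m)^√(3m)`; this is too small once `m ≥ 100000`.
Smaller `m` are covered by a descending chain of primes, each at most about `3/2` times the next.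
-/

open Finset

namespace Nat

theorem factorization_choose_of_lt_sq {p n k : ℕ} (hp : p.Prime) (hkn : k ≤ n) (hn : n < p ^ 2) :
    (n.choose k).factorization p = if p ≤ k % p + (n - k) % p then 1 else 0 := by
  rcases n.eq_zero_or_pos with rfl | hn0
  · simp [Nat.le_zero.1 hkn, hp.ne_zero]
  rw [factorization_choose hp hkn (log_lt_of_lt_pow hn0.ne' hn)]
  split_ifs with h <;> simp [Finset.filter_singleton, h]

theorem choose_mul_pow_le_succ_pow (N k b : ℕ) : N.choose k * b ^ (N - k) ≤ (b + 1) ^ N := by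
  rcases le_or_gt k N with hkN | hNk
  · rw [add_pow, ← choose_symm hkN]
    refine le_trans (le_of_eq (by ring)) <|
      Finset.single_le_sum (f := fun m => b ^ m * 1 ^ (N - m) * N.choose m)
        (fun _ _ => Nat.zero_le _) (Finset.mem_range.2 (Nat.lt_succ_of_le (N.sub_le k)))
  · simp [choose_eq_zero_of_lt hNk]

theorem choose_three_mul_succ_mul (n : ℕ) :
    (3 * n + 3).choose (n + 1) * ((n + 1) * (2 * n + 1) * (2 * n + 2)) =
      (3 * n).choose n * ((3 * n + 1) * (3 * n + 2) * (3 * n + 3)) := by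
  have h₁ := cast_choose ℚ (show n ≤ 3 * n by omega)
  have h₂ := cast_choose ℚ (show n + 1 ≤ 3 * n + 3 by omega)
  rw [show 3 * n - n = 2 * n by omega] at h₁
  rw [show 3 * n + 3 - (n + 1) = 2 * n + 2 by omega] at h₂
  rw [← Nat.cast_inj (R := ℚ)]
  push_cast
  rw [h₁, h₂]
  simp only [factorial_succ, show 3 * n + 3 = (3 * n + 2) + 1 by ring,
    show 3 * n + 2 = (3 * n + 1) + 1 by ring, show 2 * n + 2 = (2 * n + 1) + 1 by ring]
  push_cast
  field_simp
  ring

theorem twentySeven_pow_le_four_pow_mul_choose (n : ℕ) :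
    27 ^ n ≤ 4 ^ n * ((3 * n + 1) * (3 * n).choose n) := by
  induction n with
  | zero => simp
  | succ n ih =>
    have hD : 0 < (n + 1) * (2 * n + 1) * (2 * n + 2) := by positivity
    rw [show 3 * (n + 1) = 3 * n + 3 by ring]
    refine Nat.le_of_mul_le_mul_right ?_ hD
    calc 27 ^ (n + 1) * ((n + 1) * (2 * n + 1) * (2 * n + 2))
        = 27 ^ n * (27 * ((n + 1) * (2 * n + 1) * (2 * n + 2))) := by ring
      _ ≤ 4 ^ n * ((3 * n + 1) * (3 * n).choose n) *
            (4 * ((3 * n + 4) * (3 * n + 2) * (3 * n + 3))) := Nat.mul_le_mul ih (by nlinarith)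
      _ = 4 ^ (n + 1) * (3 * n + 4) *
            ((3 * n).choose n * ((3 * n + 1) * (3 * n + 2) * (3 * n + 3))) := by ring
      _ = 4 ^ (n + 1) * ((3 * n + 3 + 1) * (3 * n + 3).choose (n + 1)) *
            ((n + 1) * (2 * n + 1) * (2 * n + 2)) := by rw [← choose_three_mul_succ_mul]; ring

theorem prod_pow_le_of_forall_dvd {S : Finset ℕ} {e : ℕ → ℕ} {B : ℕ} (hB : B ≠ 0)
    (hS : ∀ q ∈ S, q.Prime) (he : ∀ q ∈ S, e q ≤ 1) (hdvd : ∀ q ∈ S, q ∣ B) :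
    ∏ q ∈ S, q ^ e q ≤ B :=
  calc ∏ q ∈ S, q ^ e q
      ≤ ∏ q ∈ S, q := prod_le_prod' fun q hq =>
        (Nat.pow_le_pow_right (hS q hq).pos (he q hq)).trans_eq (pow_one q)
    _ ≤ B := le_of_dvd (pos_of_ne_zero hB) <|
        prod_primes_dvd B (fun q hq => (hS q hq).prime) hdvd

theorem dvd_choose_of_factorization_choose_three_mul_ne_zero {n q : ℕ} (hq : q.Prime)
    (hsq : 3 * n < q ^ 2) (hlow : 3 * n < 5 * q) (hhigh : q ≤ 2 * n)
    (hv : ((3 * n).choose n).factorization q ≠ 0) : q ∣ (n + n / 2).choose (n / 2) := by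
  -- a base-`q` carry in `n + 2n` forces one in `n/2 + n`, since `q ∈ (3n/5, 2n]`
  have hcarry : q ≤ n % q + (2 * n) % q := by
    rw [factorization_choose_of_lt_sq hq (by omega) hsq, show 3 * n - n = 2 * n by omega] at hv
    by_contra h
    exact hv (if_neg h)
  rw [hq.dvd_iff_one_le_factorization (choose_pos (by omega)).ne',
    factorization_choose_of_lt_sq hq (by omega) (by omega), if_pos]
  rw [show n + n / 2 - n / 2 = n by omega, Nat.mod_eq_of_lt (show n / 2 < q by omega)]
  rcases lt_or_ge n q with hnq | hqn
  · rw [Nat.mod_eq_of_lt hnq] at hcarry ⊢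
    rw [mod_eq_sub_mod (by omega), Nat.mod_eq_of_lt (by omega)] at hcarry
    omega
  · have hmod : n % q = n - q := by rw [mod_eq_sub_mod hqn, Nat.mod_eq_of_lt (by omega)]
    rw [hmod]
    rcases lt_or_ge (2 * n) (3 * q) with h | h
    · rw [hmod, mod_eq_sub_mod (by omega), mod_eq_sub_mod (by omega),
        Nat.mod_eq_of_lt (by omega)] at hcarry
      omega
    · rw [hmod, mod_eq_sub_mod (by omega), mod_eq_sub_mod (by omega), mod_eq_sub_mod (by omega),
        Nat.mod_eq_of_lt (by omega)] at hcarry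
      omega

theorem choose_three_mul_le_of_no_prime {n : ℕ}
    (no_prime : ∀ q, q.Prime → 2 * n < q → 3 * n < q) :
    (3 * n).choose n ≤ (3 * n) ^ sqrt (3 * n) * 4 ^ (3 * n / 5) * (n + n / 2).choose (n / 2) := by
  rcases n.eq_zero_or_pos with rfl | hn
  · simp
  set C := (3 * n).choose n
  set s := sqrt (3 * n)
  have hC : ∏ q ∈ C.primeFactors, q ^ C.factorization q = C := by
    rw [← support_factorization]
    exact prod_factorization_pow_eq_self (choose_pos (by omega)).ne'
  have hprime : ∀ q ∈ C.primeFactors, q.Prime := fun q hq => prime_of_mem_primeFactors hq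
  have hle_one : ∀ q ∈ C.primeFactors.filter (¬ · ≤ s), C.factorization q ≤ 1 := fun q hq =>
    factorization_choose_le_one (sqrt_lt'.1 (not_le.1 (mem_filter.1 hq).2))
  rw [← hC, ← prod_filter_mul_prod_filter_not _ (· ≤ s),
    ← prod_filter_mul_prod_filter_not (C.primeFactors.filter (¬ · ≤ s)) (· ≤ 3 * n / 5),
    ← mul_assoc]
  refine mul_le_mul' (mul_le_mul' ?small ?middle) ?high
  case small =>
    refine (prod_le_pow_card _ _ _ fun q _ => pow_factorization_choose_le (by omega)).trans ?_
    refine Nat.pow_le_pow_right (by omega) ((card_le_card fun q hq => ?_).trans (card_Icc 1 s).le)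
    obtain ⟨hq, hqs⟩ := mem_filter.1 hq
    exact mem_Icc.2 ⟨(hprime q hq).one_lt.le, hqs⟩
  case middle =>
    refine (prod_pow_le_of_forall_dvd (primorial_pos _).ne' (fun q hq => ?_) (fun q hq => ?_)
      (fun q hq => ?_)).trans (primorial_le_four_pow _)
    · exact hprime q (mem_filter.1 (mem_filter.1 hq).1).1
    · exact hle_one q (mem_filter.1 hq).1
    · exact (hprime q (mem_filter.1 (mem_filter.1 hq).1).1).dvd_primorial_iff.2 (mem_filter.1 hq).2
  case high =>
    refine prod_pow_le_of_forall_dvd (choose_pos (by omega)).ne' (fun q hq => ?_) (fun q hq => ?_)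
      (fun q hq => ?_)
    · exact hprime q (mem_filter.1 (mem_filter.1 hq).1).1
    · exact hle_one q (mem_filter.1 hq).1
    · simp only [mem_filter, not_le] at hq
      obtain ⟨⟨hqC, hsq⟩, hq5⟩ := hq
      have hv : C.factorization q ≠ 0 := Finsupp.mem_support_iff.1 (support_factorization C ▸ hqC)
      refine dvd_choose_of_factorization_choose_three_mul_ne_zero (hprime q hqC)
        (sqrt_lt'.1 hsq) (by omega) ?_ hv
      by_contra! h
      exact hv (factorization_choose_eq_zero_of_lt (no_prime q (hprime q hqC) h))

theorem succ_pow_four_le_two_pow {v : ℕ} (hv : 17 ≤ v) : (v + 1) ^ 4 ≤ 2 ^ v := by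
  induction v, hv using Nat.le_induction with
  | base => norm_num
  | succ v hv ih =>
    have hw : 18 ≤ v + 1 := by omega
    have h₁ : 18 * (v + 1) ^ 3 ≤ (v + 1) ^ 4 := by rw [_root_.pow_succ _ 3, mul_comm]; gcongr
    have h₂ : 18 * (v + 1) ^ 2 ≤ (v + 1) ^ 3 := by rw [_root_.pow_succ _ 2, mul_comm]; gcongr
    have h₃ : 18 * (v + 1) ≤ (v + 1) ^ 2 := by rw [sq, mul_comm]; gcongr
    calc (v + 1 + 1) ^ 4 ≤ 2 * (v + 1) ^ 4 := by nlinarith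
      _ ≤ 2 * 2 ^ v := Nat.mul_le_mul_left 2 ih
      _ = 2 ^ (v + 1) := Nat.pow_succ'.symm

theorem log_succ_mul_sqrt_succ_le {n : ℕ} (hn : 100000 ≤ n) :
    20 * ((log 2 (3 * n) + 1) * (sqrt (3 * n) + 1)) ≤ 3 * n := by
  set u := log 2 (3 * n)
  set s := sqrt (3 * n)
  have hu : (u + 1) ^ 4 ≤ 3 * n := by
    have h18 : 18 ≤ u := le_log_of_pow_le (by norm_num) (by omega)
    exact (succ_pow_four_le_two_pow (by omega)).trans (pow_log_le_self 2 (by omega))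
  have hs : (s + 1) ^ 2 ≤ 4 * n := by
    have := sqrt_le' (3 * n)
    nlinarith
  refine (Nat.pow_le_pow_iff_left (n := 4) (by norm_num)).1 ?_
  calc (20 * ((u + 1) * (s + 1))) ^ 4 = 160000 * ((u + 1) ^ 4 * ((s + 1) ^ 2) ^ 2) := by ring
    _ ≤ 160000 * (3 * n * (4 * n) ^ 2) := by gcongr
    _ ≤ (3 * n) ^ 4 := by nlinarith [pow_pos (by omega : 0 < n) 3]


theorem three_mul_main_inequality {n : ℕ} (hn : 100000 ≤ n) :
    (3 * n + 1) * (3 * n) ^ sqrt (3 * n) * 2 ^ n * 4 ^ (3 * n / 5) < 3 ^ (2 * n - n / 2) := by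
  have hlog := log_succ_mul_sqrt_succ_le hn
  set u := log 2 (3 * n) + 1
  set s := sqrt (3 * n)
  have hu : 3 * n < 2 ^ u := lt_pow_succ_log_self (by norm_num) _
  have hexp : u * (s + 1) + (n + 2 * (3 * n / 5)) < 19 * ((2 * n - n / 2) / 12) := by omega
  have h4 : 4 ^ (3 * n / 5) = 2 ^ (2 * (3 * n / 5)) := by rw [pow_mul]; norm_num
  calc (3 * n + 1) * (3 * n) ^ s * 2 ^ n * 4 ^ (3 * n / 5)
      ≤ 2 ^ u * (2 ^ u) ^ s * 2 ^ n * 2 ^ (2 * (3 * n / 5)) := by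
        rw [h4]; gcongr; omega
    _ = 2 ^ (u * (s + 1) + (n + 2 * (3 * n / 5))) := by
        rw [← pow_mul, ← pow_add, ← pow_add, ← pow_add]; ring_nf
    _ < 2 ^ (19 * ((2 * n - n / 2) / 12)) := Nat.pow_lt_pow_right (by norm_num) hexp
    _ = (2 ^ 19) ^ ((2 * n - n / 2) / 12) := by rw [← pow_mul]
    _ ≤ (3 ^ 12) ^ ((2 * n - n / 2) / 12) := Nat.pow_le_pow_left (by norm_num) _
    _ ≤ 3 ^ (2 * n - n / 2) := by
        rw [← pow_mul]; exact Nat.pow_le_pow_right (by norm_num) (by omega)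

theorem exists_prime_two_mul_lt_and_le_three_mul_eventually {n : ℕ} (hn : 100000 ≤ n) :
    ∃ q, q.Prime ∧ 2 * n < q ∧ q ≤ 3 * n := by
  by_contra! no_prime
  set X := (3 * n + 1) * (3 * n) ^ sqrt (3 * n) * 2 ^ n * 4 ^ (3 * n / 5)
  have hB := choose_mul_pow_le_succ_pow (n + n / 2) (n / 2) 2
  rw [show n + n / 2 - n / 2 = n by omega] at hB
  have key : 3 ^ (n + n / 2) * (3 ^ (2 * n - n / 2) * 2 ^ n) ≤ 3 ^ (n + n / 2) * (X * 2 ^ n) :=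
    calc 3 ^ (n + n / 2) * (3 ^ (2 * n - n / 2) * 2 ^ n) = 27 ^ n * 2 ^ n := by
          rw [← mul_assoc, ← pow_add, show n + n / 2 + (2 * n - n / 2) = 3 * n by omega, pow_mul]
          norm_num
      _ ≤ 4 ^ n * ((3 * n + 1) * (3 * n).choose n) * 2 ^ n := by
          gcongr; exact twentySeven_pow_le_four_pow_mul_choose n
      _ ≤ 4 ^ n * ((3 * n + 1) * ((3 * n) ^ sqrt (3 * n) * 4 ^ (3 * n / 5) *
            (n + n / 2).choose (n / 2))) * 2 ^ n := by
          gcongr; exact choose_three_mul_le_of_no_prime no_prime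
      _ = X * 2 ^ n * ((n + n / 2).choose (n / 2) * 2 ^ n) := by
          rw [show (4 : ℕ) ^ n = 2 ^ n * 2 ^ n by rw [← mul_pow]; norm_num]; ring
      _ ≤ X * 2 ^ n * 3 ^ (n + n / 2) := by gcongr
      _ = 3 ^ (n + n / 2) * (X * 2 ^ n) := by ring
  have := Nat.le_of_mul_le_mul_right (Nat.le_of_mul_le_mul_left key (by positivity)) (by positivity)
  exact (three_mul_main_inequality hn).not_ge this

/-- When the head `p` exceeds `3m`, the chain condition `p ≤ 3 ⌈b/2⌉` gives `2m < b` for the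
next entry `b`, so the search moves down the list; the terminal `2` exceeds no `2m` with
`m ≠ 0`. -/
theorem exists_prime_two_mul_lt_and_le_three_mul_of_isChain {m : ℕ} (hm : m ≠ 0) :
    ∀ {ps : List ℕ}, (∀ p ∈ ps, p.Prime) →
      (ps ++ [2]).IsChain (fun a b => a ≤ 3 * ((b + 1) / 2)) → 2 * m < ps.headD 2 →
      ∃ q, q.Prime ∧ 2 * m < q ∧ q ≤ 3 * m
  | [], _, _, h => by simp at h; omega
  | p :: ps, hprime, hchain, h => by
    by_cases hp : p ≤ 3 * m
    · exact ⟨p, hprime p List.mem_cons_self, h, hp⟩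
    refine exists_prime_two_mul_lt_and_le_three_mul_of_isChain hm
      (fun q hq => hprime q (List.mem_cons_of_mem p hq)) hchain.tail ?_
    cases ps with
    | nil => simp at h hchain ⊢; omega
    | cons p' ps => simp [List.isChain_cons_cons] at h hchain ⊢; omega

theorem exists_prime_two_mul_lt_and_le_three_mul {m : ℕ} (hm : m ≠ 0) :
    ∃ q, q.Prime ∧ 2 * m < q ∧ q ≤ 3 * m := by
  rcases le_or_gt 100000 m with hlarge | hsmall
  · exact exists_prime_two_mul_lt_and_le_three_mul_eventually hlarge
  refine exists_prime_two_mul_lt_and_le_three_mul_of_isChain hm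
    (ps := [199999, 133337, 88897, 59273, 39521, 26347, 17569, 11717, 7817, 5227, 3491, 2333, 1559,
      1039, 701, 467, 311, 211, 149, 101, 67, 47, 31, 23, 17, 11, 7, 5, 3])
    ?_ (by decide) (by simp; omega)
  simp only [List.mem_cons, List.not_mem_nil, or_false, forall_eq_or_imp, forall_eq]
  norm_num

theorem exists_prime_lt_and_sq_le_three_mul_sq {p : ℕ} (hp : 2 ≤ p) :
    ∃ q, q.Prime ∧ p < q ∧ q ^ 2 ≤ 3 * p ^ 2 := by
  rcases lt_or_ge p 7 with hsmall | hlarge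
  · interval_cases p
    exacts [⟨3, by norm_num⟩, ⟨5, by norm_num⟩, ⟨5, by norm_num⟩, ⟨7, by norm_num⟩,
      ⟨7, by norm_num⟩]
  obtain ⟨q, hq, hpq, hq3⟩ := exists_prime_two_mul_lt_and_le_three_mul (m := (p + 1) / 2) (by omega)
  refine ⟨q, hq, by omega, ?_⟩
  have h₁ : 2 * q ≤ 3 * (p + 1) := by omega
  nlinarith

end Nat

theorem stmt_1_general (n p : ℕ) (hp : p.Prime) (hp2 : p ^ 2 ≤ n)
    (hmax : ∀ q : ℕ, q.Prime → q ^ 2 ≤ n → q ≤ p) :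
    n / p ^ 2 = 1 ∨ n / p ^ 2 = 2 := by
  obtain ⟨q, hq, hpq, hq3⟩ := Nat.exists_prime_lt_and_sq_le_three_mul_sq hp.two_le
  have hn : n < 3 * p ^ 2 := by
    by_contra! h
    exact (hmax q hq (hq3.trans h)).not_gt hpq
  have h₁ : 1 ≤ n / p ^ 2 := (Nat.one_le_div_iff (pow_pos hp.pos 2)).2 hp2
  have h₂ : n / p ^ 2 < 3 := Nat.div_lt_of_lt_mul (mul_comm 3 (p ^ 2) ▸ hn)
  omega

theorem stmt_1 (n p : ℕ) (hn : 9 ≤ n) (hp : p.Prime) (hp2 : p ^ 2 ≤ n)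
    (hmax : ∀ q : ℕ, q.Prime → q ^ 2 ≤ n → q ≤ p) :
    n / p ^ 2 = 1 ∨ n / p ^ 2 = 2 :=
  stmt_1_general n p hp hp2 hmax
end

section
/- If N is a normal subgroup of a finite group G and x ∈ N, then the size of the conjugacy class of x in N divides the size of the conjugacy class of x in G. -/
/-!
Both class sizes are indices of centralizers: `|x^G| = [G : C_G(x)]` and
`|x^N| = [N : C_G(x) ∩ N]`. For any subgroup `H` and normal subgroup `N`, the `N`-orbits on
`G ⧸ H` are blocks of the transitive `G`-action, so they all have the same size; the orbit of the
trivial coset has size `[N : H ∩ N]`, which therefore divides `|G ⧸ H| = [G : H]`.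
-/

open MulAction

namespace Subgroup

variable {G : Type*} [Group G]

theorem relIndex_dvd_index_of_right_normal (H N : Subgroup G) [N.Normal] :
    H.relIndex N ∣ H.index := by
  have hstab : stabilizer N ((1 : G) : G ⧸ H) = H.subgroupOf N := by
    ext n
    change (n : G) ∈ stabilizer G ((1 : G) : G ⧸ H) ↔ _
    rw [stabilizer_quotient, mem_subgroupOf]
  rw [relIndex, ← hstab, index_stabilizer]
  exact (IsBlock.orbit_of_normal (G := G) ((1 : G) : G ⧸ H)).ncard_dvd_card ⟨_, mem_orbit_self _⟩

theorem centralizer_eq_subgroupOf_centralizer_image {H : Subgroup G} (s : Set H) :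
    centralizer s = (centralizer ((↑) '' s)).subgroupOf H := by
  ext n
  simp [mem_centralizer_iff, mem_subgroupOf, Subtype.ext_iff]

theorem index_centralizer_singleton (g : G) :
    (centralizer {g}).index = Nat.card (orbit (ConjAct G) g) := by
  rw [centralizer_eq_comap_stabilizer, Nat.card_coe_set_eq, ← index_stabilizer]
  exact index_comap_of_surjective _ ConjAct.toConjAct.surjective

end Subgroup

open Subgroup in
theorem stmt_2_general {G : Type*} [Group G] (N : Subgroup G) [N.Normal]
    (x : G) (hx : x ∈ N) :
    Nat.card (MulAction.orbit (ConjAct N) (⟨x, hx⟩ : N)) ∣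
      Nat.card (MulAction.orbit (ConjAct G) x) := by
  rw [← index_centralizer_singleton, ← index_centralizer_singleton,
    centralizer_eq_subgroupOf_centralizer_image, Set.image_singleton]
  exact relIndex_dvd_index_of_right_normal _ N

theorem stmt_2 {G : Type*} [Group G] [Finite G] (N : Subgroup G) [N.Normal]
    (x : G) (hx : x ∈ N) :
    Nat.card (MulAction.orbit (ConjAct N) (⟨x, hx⟩ : N)) ∣
      Nat.card (MulAction.orbit (ConjAct G) x) :=
  stmt_2_general N x hx
end

section
/- For any prime power q ≥ 4 with q ≠ 4 and q ≠ 8 such that q−1 is a power of a prime, one of the following holds: q = 2^l with 2^l − 1 a Mersenne prime and l odd with l ≥ 5; q is a Fermat prime; or q = 9. -/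
open Finset in
lemma aux_geom {x : ℤ} (hx : Odd x) {n : ℕ} (hn : Odd n) :
    ∃ Q : ℤ, Odd Q ∧ Q * (x - 1) = x ^ n - 1 := by
  refine ⟨∑ i ∈ range n, x ^ i, ?_, geom_sum_mul x n⟩
  rw [Int.not_even_iff_odd.symm, even_iff_two_dvd, show (2:ℤ) = ((2:ℕ):ℤ) by norm_cast,
    ← ZMod.intCast_zmod_eq_zero_iff_dvd]
  obtain ⟨c, hc⟩ := hx
  have : ((∑ i ∈ range n, x ^ i : ℤ) : ZMod 2) = (n : ZMod 2) := by
    push_cast [hc]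
    simp [add_pow, show ((2:ZMod 2)) = 0 by decide]
  rw [this]
  rw [Nat.odd_iff] at hn
  rw [show (n : ZMod 2) = ((n % 2 : ℕ) : ZMod 2) by rw [ZMod.natCast_mod], hn]
  decide

lemma aux_sq_mod8 {a : ℕ} (ha : Odd a) : a ^ 2 % 8 = 1 := by
  obtain ⟨b, rfl⟩ := ha
  obtain ⟨c, hc⟩ := Nat.even_mul_succ_self b
  have : (2 * b + 1) ^ 2 = 4 * (b * (b + 1)) + 1 := by ring
  rw [this, hc]
  omega

lemma aux_odd_dvd_pow2 {d k : ℕ} (hd : Odd d) (hdvd : d ∣ 2 ^ k) : d = 1 :=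
  (hd.coprime_two_right.pow_right k).eq_one_of_dvd hdvd

/-- `(a-1)*(a+1) = a^2 - 1` in ℕ for `a ≥ 1`. -/
lemma aux_sq_sub_one {a : ℕ} (ha : 1 ≤ a) : (a - 1) * (a + 1) = a ^ 2 - 1 := by
  obtain ⟨b, rfl⟩ := Nat.exists_eq_add_of_le ha
  have h1 : 1 + b - 1 = b := by omega
  rw [h1]
  have h2 : (1 + b) ^ 2 = b * (1 + b + 1) + 1 := by ring
  rw [h2, Nat.add_sub_cancel]

/-- key: if `s` is odd, `n` is odd with `n ≥ 2`, `s ≥ 2`, then `s^n - 1 ≠ ±`… precisely: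
`s^n + 1` cannot be a power of two unless… we phrase: if `Q*(x-1) = x^n-1` with `Q` odd dividing
a power of two then `Q = 1`. Used inline. -/
theorem stmt_5 (q : ℕ) (hq : IsPrimePow q) (hq4 : 4 ≤ q) (hne4 : q ≠ 4) (hne8 : q ≠ 8)
    (hq1 : IsPrimePow (q - 1)) :
    (∃ l : ℕ, q = 2 ^ l ∧ Nat.Prime (2 ^ l - 1) ∧ Odd l ∧ 5 ≤ l) ∨
    (∃ l : ℕ, q = 2 ^ (2 ^ l) + 1 ∧ Nat.Prime q) ∨
    q = 9 := by
  obtain ⟨p, k, hp, hk, hpk⟩ := hq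
  obtain ⟨r, m, hr, hm, hrm⟩ := hq1
  replace hp : p.Prime := Nat.prime_iff.mpr hp
  replace hr : r.Prime := Nat.prime_iff.mpr hr
  rcases hp.eq_two_or_odd' with rfl | hpodd
  · -- q = 2^k
    left
    have hk4 : 4 ≤ k := by
      by_contra h
      interval_cases k <;> omega
    have h2k : 2 ^ k = q := hpk
    have hq1odd : Odd (q - 1) := by
      have : 2 ∣ q := by rw [← h2k]; exact dvd_pow_self 2 (by omega)
      obtain ⟨c, hc⟩ := this
      refine ⟨c - 1, by omega⟩
    have hrodd : Odd r := by
      rcases r.even_or_odd with he | ho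
      · exfalso
        have : 2 ∣ r ^ m := dvd_pow (even_iff_two_dvd.mp he) (by omega)
        rw [hrm] at this
        rw [Nat.odd_iff] at hq1odd
        omega
      · exact ho
    have hr3 : 3 ≤ r := by
      have := hp  -- dummy
      rcases hr.eq_two_or_odd' with rfl | _
      · exfalso; rw [Nat.odd_iff] at hrodd; omega
      · exact (Nat.lt_of_le_of_ne hr.two_le (by rintro rfl; rw [Nat.odd_iff] at hrodd; omega))
    -- show m = 1
    have hm1 : m = 1 := by
      by_contra hm2
      have hm2' : 2 ≤ m := by omega
      have hsum : r ^ m + 1 = 2 ^ k := by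
        rw [hrm, h2k]; omega
      rcases m.even_or_odd with ⟨t, rfl⟩ | hmodd
      · -- m even : odd square ≡ 1 mod 8, but 2^k - 1 ≡ 7 mod 8
        have h1 : (r ^ t) ^ 2 % 8 = 1 := aux_sq_mod8 (hrodd.pow)
        have h2 : (r ^ t) ^ 2 = r ^ (t + t) := by rw [← pow_mul]; ring_nf
        have h8 : (8 : ℕ) ∣ 2 ^ k := by
          have : (2:ℕ) ^ 3 ∣ 2 ^ k := pow_dvd_pow 2 (by omega)
          simpa using this
        rw [h2] at h1
        omega
      · -- m odd ≥ 3
        obtain ⟨Q, hQodd, hQ⟩ := aux_geom (x := -(r:ℤ)) (by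
          obtain ⟨c, hc⟩ := hrodd; exact ⟨-c - 1, by push_cast [hc]; ring⟩) hmodd
        rw [hmodd.neg_pow] at hQ
        have hQ' : Q * ((r:ℤ) + 1) = (r:ℤ) ^ m + 1 := by linear_combination -hQ
        have hsumz : (2:ℤ) ^ k = (r:ℤ) ^ m + 1 := by exact_mod_cast hsum.symm
        have hQpos : 0 < Q := by
          by_contra h
          push_neg at h
          nlinarith [show (0:ℤ) < (r:ℤ) + 1 by positivity,
            show (0:ℤ) < (r:ℤ) ^ m + 1 by positivity]
        set N := Q.toNat with hNdef
        have hNQ : (N : ℤ) = Q := Int.toNat_of_nonneg hQpos.le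
        have hNodd : Odd N := by
          rw [Int.odd_iff] at hQodd
          rw [Nat.odd_iff]
          omega
        have hNdvd : N ∣ 2 ^ k := by
          have hdz : (N : ℤ) ∣ ((2:ℕ) ^ k : ℤ) := by
            refine ⟨(r:ℤ) + 1, ?_⟩
            rw [hNQ]
            push_cast
            rw [hsumz, ← hQ']
          exact_mod_cast hdz
        have hN1 : N = 1 := aux_odd_dvd_pow2 hNodd hNdvd
        have hone : (r:ℤ) + 1 = (r:ℤ) ^ m + 1 := by
          rw [← hQ', ← hNQ, hN1]
          push_cast
          ring
        have hrm' : (r:ℤ) ^ m = (r:ℤ) := by linarith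
        have hge : (r:ℤ) ^ 2 ≤ (r:ℤ) ^ m :=
          pow_le_pow_right₀ (by exact_mod_cast hr.one_le) hm2'
        nlinarith [show (3:ℤ) ≤ (r:ℤ) from by exact_mod_cast hr3]
    -- now q - 1 = r prime
    have hqr : 2 ^ k - 1 = r := by rw [h2k, ← hrm, hm1, pow_one]
    have hkodd : Odd k := by
      rcases k.even_or_odd with ⟨t, rfl⟩ | ho
      · exfalso
        have ht2 : 2 ≤ t := by omega
        have hfac : (2 ^ t - 1) * (2 ^ t + 1) = 2 ^ (t + t) - 1 := by
          have := aux_sq_sub_one (a := 2 ^ t) (Nat.one_le_two_pow)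
          rw [this, ← pow_mul]; ring_nf
        have hprime : Nat.Prime ((2 ^ t - 1) * (2 ^ t + 1)) := by
          rw [hfac, hqr]; exact hr
        rw [Nat.prime_mul_iff] at hprime
        have h4 : 4 ≤ 2 ^ t := by
          calc (4:ℕ) = 2 ^ 2 := by norm_num
          _ ≤ 2 ^ t := Nat.pow_le_pow_right (by norm_num) ht2
        rcases hprime with ⟨_, h⟩ | ⟨_, h⟩ <;> omega
      · exact ho
    exact ⟨k, h2k.symm, hqr ▸ hr, hkodd, by rcases hkodd with ⟨c, hc⟩; omega⟩
  · -- p odd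
    have hp3 : 3 ≤ p := by
      rcases Nat.lt_or_ge p 3 with h | h
      · interval_cases p
        · exact absurd hp (by norm_num)
        · exact absurd hp (by norm_num)
        · exfalso; rw [Nat.odd_iff] at hpodd; omega
      · exact h
    have hqodd : Odd q := by rw [← hpk]; exact hpodd.pow
    have hr2 : r = 2 := by
      have h2 : (2:ℕ) ∣ r ^ m := by
        rw [hrm]
        rw [Nat.odd_iff] at hqodd
        omega
      have := (Nat.Prime.dvd_of_dvd_pow Nat.prime_two h2)
      exact ((Nat.prime_dvd_prime_iff_eq Nat.prime_two hr).mp this).symm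
    subst hr2
    have hq2m : q = 2 ^ m + 1 := by omega
    have hm2 : 2 ≤ m := by
      by_contra h
      interval_cases m <;> omega
    rcases Nat.eq_or_lt_of_le hk with hk1 | hk2
    · -- k = 1 : q prime, Fermat case
      right; left
      have hqprime : q.Prime := by rw [← hpk, ← hk1, pow_one]; exact hp
      have : (2 ^ m + 1).Prime := hq2m ▸ hqprime
      obtain ⟨l, hl⟩ := Nat.pow_of_pow_add_prime (a := 2) (by norm_num) (by omega) this
      exact ⟨l, by rw [hq2m, hl], hqprime⟩
    · -- k ≥ 2 : show q = 9
      right; right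
      have hk2' : 2 ≤ k := hk2
      have hpow : p ^ k - 1 = 2 ^ m := by rw [hpk, ← hrm]
      rcases k.even_or_odd with ⟨t, rfl⟩ | hkodd
      · -- k even
        have ht1 : 1 ≤ t := by omega
        have hpt : 3 ≤ p ^ t := le_trans hp3 (Nat.le_self_pow (by omega) p)
        have hfac : (p ^ t - 1) * (p ^ t + 1) = 2 ^ m := by
          rw [aux_sq_sub_one (by omega), ← pow_mul, ← hpow]
          ring_nf
        have hdvd1 : (p ^ t - 1) ∣ 2 ^ m := ⟨p ^ t + 1, hfac.symm⟩
        have hdvd2 : (p ^ t + 1) ∣ 2 ^ m := ⟨p ^ t - 1, by rw [← hfac]; ring⟩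
        obtain ⟨a, ha, hae⟩ := (Nat.dvd_prime_pow Nat.prime_two).mp hdvd1
        obtain ⟨b, hb, hbe⟩ := (Nat.dvd_prime_pow Nat.prime_two).mp hdvd2
        have ha1 : 1 ≤ a := by
          rcases Nat.eq_zero_or_pos a with rfl | h
          · exfalso; rw [pow_zero] at hae; omega
          · exact h
        have hab : 2 ^ b = 2 ^ a + 2 := by omega
        have ha1' : a = 1 := by
          by_contra h
          have ha2 : 2 ≤ a := by omega
          have h4a : (4:ℕ) ∣ 2 ^ a := by
            have : (2:ℕ) ^ 2 ∣ 2 ^ a := pow_dvd_pow 2 ha2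
            simpa using this
          have hb3 : 3 ≤ b := by
            have : 2 ^ a + 2 ≥ 6 := by
              have : (4:ℕ) ≤ 2 ^ a := by
                calc (4:ℕ) = 2 ^ 2 := by norm_num
                _ ≤ 2 ^ a := Nat.pow_le_pow_right (by norm_num) ha2
              omega
            by_contra hb3
            interval_cases b <;> omega
          have h4b : (4:ℕ) ∣ 2 ^ b := by
            have : (2:ℕ) ^ 2 ∣ 2 ^ b := pow_dvd_pow 2 (by omega)
            simpa using this
          omega
        have hpt3 : p ^ t = 3 := by rw [ha1', pow_one] at hae; omega
        have ht1' : t = 1 := by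
          by_contra h
          have : 2 ≤ t := by omega
          have : p ^ 2 ≤ p ^ t := Nat.pow_le_pow_right (by omega) this
          nlinarith
        have hp3' : p = 3 := by rwa [ht1', pow_one] at hpt3
        rw [← hpk, hp3', ht1']
        norm_num
      · -- k odd ≥ 3
        exfalso
        obtain ⟨Q, hQodd, hQ⟩ := aux_geom (x := (p:ℤ)) (by
          obtain ⟨c, hc⟩ := hpodd; exact ⟨c, by push_cast [hc]; ring⟩) hkodd
        have hsum : (p:ℤ) ^ k - 1 = (2:ℤ) ^ m := by
          have h1 : (1:ℕ) ≤ p ^ k := Nat.one_le_pow _ _ (by omega)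
          have := hpow
          zify [h1] at this
          exact_mod_cast this
        have hQpos : 0 < Q := by
          by_contra h
          push_neg at h
          have h1 : (0:ℤ) < (p:ℤ) ^ k - 1 := by
            have : (2:ℤ) ≤ (p:ℤ) := by exact_mod_cast hp.two_le
            have : (2:ℤ) ^ k ≤ (p:ℤ) ^ k := pow_le_pow_left₀ (by norm_num) this k
            have h2 : (2:ℤ) ≤ 2 ^ k := le_self_pow₀ (by norm_num) (by omega)
            linarith
          nlinarith [show (0:ℤ) < (p:ℤ) - 1 from by
            have : (2:ℤ) ≤ (p:ℤ) := by exact_mod_cast hp.two_le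
            linarith]
        set N := Q.toNat with hNdef
        have hNQ : (N : ℤ) = Q := Int.toNat_of_nonneg hQpos.le
        have hNodd : Odd N := by
          rw [Int.odd_iff] at hQodd
          rw [Nat.odd_iff]
          omega
        have hNdvd : N ∣ 2 ^ m := by
          have hdz : (N:ℤ) ∣ ((2:ℕ)^m : ℤ) := by
            refine ⟨(p:ℤ) - 1, ?_⟩
            rw [hNQ]
            push_cast
            rw [← hsum, ← hQ]
          exact_mod_cast Int.ofNat_dvd.mp (by exact_mod_cast hdz)
        have hN1 : N = 1 := aux_odd_dvd_pow2 hNodd hNdvd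
        have hone : (p:ℤ) - 1 = (p:ℤ) ^ k - 1 := by
          rw [← hQ, ← hNQ, hN1]
          push_cast
          ring
        have hpk' : (p:ℤ) ^ k = (p:ℤ) := by linarith
        have hge : (p:ℤ) ^ 2 ≤ (p:ℤ) ^ k := by
          apply pow_le_pow_right₀ (by exact_mod_cast hp.one_le) hk2'
        nlinarith [show (3:ℤ) ≤ (p:ℤ) from by exact_mod_cast hp3]
end

section
/- For every prime power q ≥ 4, the product (q−1)·q·(q+1) is divisible by at least three distinct primes. -/
lemma aux_odd_prime_factor (n : ℕ) (hn : 3 ≤ n) (ho : Odd n) :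
    ∃ r : ℕ, r.Prime ∧ r ≠ 2 ∧ r ∣ n := by
  refine ⟨n.minFac, Nat.minFac_prime (by omega), ?_, n.minFac_dvd⟩
  intro h
  have h2 : 2 ∣ n := h ▸ n.minFac_dvd
  rw [Nat.odd_iff] at ho
  omega

theorem stmt_8 (q : ℕ) (hq : IsPrimePow q) (hq4 : 4 ≤ q) :
    ∃ p₁ p₂ p₃ : ℕ, p₁.Prime ∧ p₂.Prime ∧ p₃.Prime ∧ p₁ ≠ p₂ ∧ p₁ ≠ p₃ ∧ p₂ ≠ p₃ ∧
      p₁ ∣ (q - 1) * q * (q + 1) ∧ p₂ ∣ (q - 1) * q * (q + 1) ∧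
      p₃ ∣ (q - 1) * q * (q + 1) := by
  obtain ⟨p, k, hp, hk, rfl⟩ := hq
  have hp' : p.Prime := hp.nat_prime
  set q := p ^ k with hqdef
  have hpq : p ∣ q := dvd_pow_self p hk.ne'
  have hd1 : ∀ d : ℕ, d ∣ q - 1 → d ∣ (q - 1) * q * (q + 1) :=
    fun d h => Dvd.dvd.mul_right (Dvd.dvd.mul_right h q) (q + 1)
  have hd2 : ∀ d : ℕ, d ∣ q → d ∣ (q - 1) * q * (q + 1) :=
    fun d h => Dvd.dvd.mul_right (Dvd.dvd.mul_left h (q - 1)) (q + 1)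
  have hd3 : ∀ d : ℕ, d ∣ q + 1 → d ∣ (q - 1) * q * (q + 1) :=
    fun d h => Dvd.dvd.mul_left h ((q - 1) * q)
  rcases Nat.even_or_odd q with he | ho
  · -- q even
    rw [Nat.even_iff] at he
    obtain ⟨r, hr, hr2, hrd⟩ := aux_odd_prime_factor (q - 1) (by omega)
      (by rw [Nat.odd_iff]; omega)
    obtain ⟨s, hs, hs2, hsd⟩ := aux_odd_prime_factor (q + 1) (by omega)
      (by rw [Nat.odd_iff]; omega)
    refine ⟨2, r, s, Nat.prime_two, hr, hs, fun h => hr2 h.symm, fun h => hs2 h.symm, ?_,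
      hd2 2 (by omega), hd1 r hrd, hd3 s hsd⟩
    intro h
    subst h
    have : r ∣ (q + 1) - (q - 1) := Nat.dvd_sub hsd hrd
    have h2 : (q + 1) - (q - 1) = 2 := by omega
    rw [h2] at this
    exact hr2 ((Nat.prime_dvd_prime_iff_eq hr Nat.prime_two).mp this)
  · -- q odd
    rw [Nat.odd_iff] at ho
    have hp2 : p ≠ 2 := by
      intro h
      have : (2 : ℕ) ∣ q := h ▸ hpq
      omega
    have hkey : ∃ n : ℕ, n % 4 = 2 ∧ 4 ≤ n ∧ (n ∣ q - 1 ∨ n ∣ q + 1) := by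
      rcases Nat.lt_or_ge (q % 4) 2 with h | h
      · exact ⟨q + 1, by omega, by omega, Or.inr dvd_rfl⟩
      · exact ⟨q - 1, by omega, by omega, Or.inl dvd_rfl⟩
    obtain ⟨n, hn4, hnge, hnd⟩ := hkey
    obtain ⟨r, hr, hr2, hrd⟩ := aux_odd_prime_factor (n / 2) (by omega)
      (by rw [Nat.odd_iff]; omega)
    have hrn : r ∣ n := hrd.trans ⟨2, by omega⟩
    have hrp : r ≠ p := by
      intro h
      subst h
      rcases hnd with hnd | hnd
      · have : r ∣ q - 1 := hrn.trans hnd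
        have h1 : r ∣ q - (q - 1) := Nat.dvd_sub hpq this
        have : q - (q - 1) = 1 := by omega
        rw [this] at h1
        exact hr.one_lt.ne' (Nat.dvd_one.mp h1)
      · have : r ∣ q + 1 := hrn.trans hnd
        have h1 : r ∣ (q + 1) - q := Nat.dvd_sub this hpq
        have : (q + 1) - q = 1 := by omega
        rw [this] at h1
        exact hr.one_lt.ne' (Nat.dvd_one.mp h1)
    have hrdvd : r ∣ (q - 1) * q * (q + 1) := by
      rcases hnd with hnd | hnd
      · exact hd1 r (hrn.trans hnd)
      · exact hd3 r (hrn.trans hnd)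
    exact ⟨2, p, r, Nat.prime_two, hp', hr, fun h => hp2 h.symm, fun h => hr2 h.symm,
      fun h => hrp h.symm, hd1 2 ⟨(q - 1) / 2, by omega⟩, hd2 p hpq, hrdvd⟩
end

section
/- Let n ≥ 9, p the largest prime with p² ≤ n, and x ∈ A_n a product of k ∈ {1,2} disjoint p²-cycles (with n = k·p² + r, 0 ≤ r < p²). Then every prime dividing |A_n| divides the conjugacy class size of x in A_n. -/
/-!
The class of `x` has size `|A_n| / |C_{A_n}(x)|`, and `C_{A_n}(x)` is a subgroup of the
centralizer of `x` in `S_n`, whose order `r! · (p²)^k · k!` is known. Since `2 · |A_n| = n!`,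
it suffices that for every prime `q ≤ n` the `q`-adic valuation of `2 · r! · (p²)^k · k!` is
smaller than that of `n!`. This follows from `v_q((kp²)!) + v_q(r!) ≤ v_q(n!)` together with
Legendre's bound `v_q((kp²)!) ≥ kp²/q`, except for primes `q > kp²`, which divide `n!` but none
of `2, p, k!, r!`.
-/

open MulAction Nat Equiv Equiv.Perm

theorem Subgroup.card_dvd_card_orbit_conjAct_mul_card_centralizer {G : Type*} [Group G]
    (H : Subgroup G) (x : H) :
    Nat.card H ∣ Nat.card (orbit (ConjAct H) x) * Nat.card (centralizer {(x : G)}) := by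
  have horbit : Nat.card (orbit (ConjAct H) x) * Nat.card (centralizer {x}) = Nat.card H := by
    rw [nat_card_centralizer_nat_card_stabilizer, Nat.card_coe_set_eq, ← index_stabilizer,
      index_mul_card, Nat.card_congr ConjAct.ofConjAct.toEquiv]
  have hmap : (centralizer {x}).map H.subtype ≤ centralizer {(x : G)} := by
    simpa using map_centralizer_le_centralizer_image {x} H.subtype
  rw [← horbit, ← card_map_of_injective H.subtype_injective]
  exact Nat.mul_dvd_mul_left _ (card_dvd_of_le hmap)

theorem Equiv.Perm.nat_card_centralizer_of_cycleType_eq_replicate {α : Type*} [Fintype α]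
    [DecidableEq α] {g : Perm α} {k m : ℕ} (h : g.cycleType = Multiset.replicate k m) :
    Nat.card (Subgroup.centralizer {g}) = (Fintype.card α - k * m)! * m ^ k * k ! := by
  rw [nat_card_centralizer, h]
  rcases eq_or_ne k 0 with rfl | hk
  · simp
  · simp [Multiset.toFinset_replicate, hk]

theorem div_le_padicValNat_factorial (p n : ℕ) [Fact p.Prime] : n / p ≤ padicValNat p n ! := by
  rw [← padicValNat_mul_div_factorial, padicValNat_factorial_mul]
  exact Nat.le_add_left _ _

theorem padicValNat_le_of_dvd {p a b : ℕ} [Fact p.Prime] (hb : b ≠ 0) (h : a ∣ b) :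
    padicValNat p a ≤ padicValNat p b :=
  (padicValNat_dvd_iff_le hb).mp (pow_padicValNat_dvd.trans h)

theorem padicValNat_factorial_add_factorial_le (p m r : ℕ) [Fact p.Prime] :
    padicValNat p m ! + padicValNat p r ! ≤ padicValNat p (m + r)! := by
  rw [← padicValNat.mul (factorial_ne_zero m) (factorial_ne_zero r)]
  exact padicValNat_le_of_dvd (factorial_ne_zero _) (factorial_mul_factorial_dvd_factorial_add m r)

theorem padicValNat_factorial_eq_zero {p n : ℕ} [hp : Fact p.Prime] (h : n < p) :
    padicValNat p n ! = 0 :=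
  padicValNat.eq_zero_of_not_dvd fun hdvd => (hp.out.dvd_factorial.mp hdvd).not_gt h

theorem dvd_of_dvd_mul_of_padicValNat_lt {q a b c : ℕ} [Fact q.Prime] (h : c ∣ a * b)
    (hb : b ≠ 0) (hlt : padicValNat q b < padicValNat q c) : q ∣ a := by
  rcases eq_or_ne a 0 with rfl | ha
  · exact dvd_zero q
  have hc := padicValNat_le_of_dvd (p := q) (mul_ne_zero ha hb) h
  rw [padicValNat.mul ha hb] at hc
  exact dvd_of_one_le_padicValNat (by omega)

theorem padicValNat_two_mul_factorial_mul_pow_mul_factorial_lt {p k r q : ℕ}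
    [hq : Fact q.Prime] (hp : p.Prime) (hp3 : 3 ≤ p) (hk : k = 1 ∨ k = 2) (hr : r < p ^ 2)
    (hqn : q ≤ k * p ^ 2 + r) :
    padicValNat q (2 * (r ! * (p ^ 2) ^ k * k !)) < padicValNat q (k * p ^ 2 + r)! := by
  have : Fact p.Prime := ⟨hp⟩
  set m := k * p ^ 2 with hm
  have hk1 : 1 ≤ k := by omega
  have hpm : p ^ 2 ≤ m := Nat.le_mul_of_pos_left _ hk1
  have hm9 : 9 ≤ m := le_trans (by nlinarith) hpm
  have hsplit := padicValNat_factorial_add_factorial_le q m r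
  have hlegendre := div_le_padicValNat_factorial q m
  have hexpand : padicValNat q (2 * (r ! * (p ^ 2) ^ k * k !)) =
      padicValNat q 2 + 2 * k * padicValNat q p + padicValNat q k ! + padicValNat q r ! := by
    rw [padicValNat.mul two_ne_zero (by positivity), padicValNat.mul (by positivity)
      (factorial_ne_zero k), padicValNat.mul (factorial_ne_zero r) (by positivity), ← pow_mul,
      padicValNat.pow]
    ring
  rw [hexpand]
  rcases eq_or_ne q 2 with rfl | hq2
  · have hvp : padicValNat 2 p = 0 := padicValNat_primes (by omega)
    have hvk : padicValNat 2 k ! ≤ 1 := by rcases hk with rfl | rfl <;> simp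
    have : 4 ≤ m / 2 := by omega
    rw [padicValNat_self, hvp, mul_zero]
    omega
  have hv2 : padicValNat q 2 = 0 := padicValNat_primes hq2
  have hvk : padicValNat q k ! = 0 :=
    padicValNat_factorial_eq_zero (by have := hq.out.two_le; omega)
  rcases eq_or_ne q p with rfl | hqp
  · have : m / q = k * q := by rw [hm, pow_two, ← mul_assoc, Nat.mul_div_cancel _ hp.pos]
    have : 2 * k < k * q := by nlinarith
    rw [hv2, hvk, padicValNat_self]
    omega
  have hvp : padicValNat q p = 0 := padicValNat_primes hqp
  rw [hv2, hvp, hvk]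
  by_cases hqm : q ≤ m
  · have : 1 ≤ m / q := (Nat.one_le_div_iff hq.out.pos).mpr hqm
    omega
  · rw [padicValNat_factorial_eq_zero (by omega)]
    exact one_le_padicValNat_of_dvd (factorial_ne_zero _) (hq.out.dvd_factorial.mpr hqn)

theorem stmt_11_general (n p k r : ℕ) (hn : 9 ≤ n) (hp : p.Prime)
    (hmax : ∀ q : ℕ, q.Prime → q ^ 2 ≤ n → q ≤ p)
    (hk : k = 1 ∨ k = 2) (hnkr : n = k * p ^ 2 + r) (hr : r < p ^ 2)
    (x : alternatingGroup (Fin n))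
    (hx : (x : Equiv.Perm (Fin n)).cycleType = Multiset.replicate k (p ^ 2)) :
    ∀ q : ℕ, q.Prime → q ∣ Nat.card (alternatingGroup (Fin n)) →
      q ∣ Nat.card (MulAction.orbit (ConjAct (alternatingGroup (Fin n))) x) := by
  intro q hq hqA
  have : Fact q.Prime := ⟨hq⟩
  have : Nontrivial (Fin n) := Fin.nontrivial_iff_two_le.mpr (by omega)
  have hp3 : 3 ≤ p := hmax 3 Nat.prime_three (by omega)
  have hcard : 2 * Nat.card (alternatingGroup (Fin n)) = n ! := by
    rw [Nat.card_eq_fintype_card, two_mul_card_alternatingGroup, Fintype.card_perm,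
      Fintype.card_fin]
  have hcent : Nat.card (Subgroup.centralizer {(x : Perm (Fin n))}) = r ! * (p ^ 2) ^ k * k ! := by
    rw [nat_card_centralizer_of_cycleType_eq_replicate hx, Fintype.card_fin, hnkr,
      Nat.add_sub_cancel_left]
  have hdvd : n ! ∣ Nat.card (orbit (ConjAct (alternatingGroup (Fin n))) x) *
      (2 * (r ! * (p ^ 2) ^ k * k !)) := by
    rw [← hcard, ← hcent, mul_left_comm]
    exact mul_dvd_mul_left 2 (Subgroup.card_dvd_card_orbit_conjAct_mul_card_centralizer _ x)
  have hqn : q ≤ n := hq.dvd_factorial.mp (hqA.trans (Dvd.intro_left 2 hcard))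
  subst hnkr
  exact dvd_of_dvd_mul_of_padicValNat_lt hdvd (by positivity)
    (padicValNat_two_mul_factorial_mul_pow_mul_factorial_lt hp hp3 hk hr hqn)

theorem stmt_11 (n p k r : ℕ) (hn : 9 ≤ n) (hp : p.Prime) (hp2 : p ^ 2 ≤ n)
    (hmax : ∀ q : ℕ, q.Prime → q ^ 2 ≤ n → q ≤ p)
    (hk : k = 1 ∨ k = 2) (hnkr : n = k * p ^ 2 + r) (hr : r < p ^ 2)
    (x : alternatingGroup (Fin n))
    (hx : (x : Equiv.Perm (Fin n)).cycleType = Multiset.replicate k (p ^ 2)) :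
    ∀ q : ℕ, q.Prime → q ∣ Nat.card (alternatingGroup (Fin n)) →
      q ∣ Nat.card (MulAction.orbit (ConjAct (alternatingGroup (Fin n))) x) :=
  stmt_11_general n p k r hn hp hmax hk hnkr hr x hx
end

section
/- If P is a Sylow p-subgroup of the alternating group A_n (p an odd prime, p² ≤ n), then the center Z(P) has exponent p; consequently no element of order p² in A_n centralizes a Sylow p-subgroup. -/
/-!
An element `u` of order `p²` in `Sₙ` has only `p`- and `p²`-cycles, say `a` and `b ≥ 1` of them,
and `f` fixed points. Its centralizer has order `f! · pᵃ a! · p²ᵇ b!`, whose `p`-adic valuation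
falls short of that of `n!`, a multiple of `f! (pa)! (p²b)!`, by at least `(p - 1) b > 0`; so the
centralizer contains no Sylow `p`-subgroup of `Sₙ`. For odd `p` a Sylow `p`-subgroup of `Aₙ` is
one of `Sₙ`. Finally, a central element `z` of a `p`-group with `z ^ p ≠ 1` has a power of order
`p²`, which then centralizes the whole group.
-/

open Nat Equiv Subgroup

lemma padicValNat_factorial_add_le (p a b : ℕ) [Fact p.Prime] :
    padicValNat p a ! + padicValNat p b ! ≤ padicValNat p (a + b)! := by
  rw [← padicValNat.mul (factorial_ne_zero a) (factorial_ne_zero b)]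
  exact (padicValNat_dvd_iff_le (factorial_ne_zero _)).mp
    (pow_padicValNat_dvd.trans (factorial_mul_factorial_dvd_factorial_add a b))

lemma padicValNat_factorial_sq_mul (p b : ℕ) [Fact p.Prime] :
    padicValNat p (p ^ 2 * b)! = padicValNat p b ! + b + p * b := by
  rw [sq, mul_assoc, padicValNat_factorial_mul, padicValNat_factorial_mul]

/-- The left-hand side is the valuation of the order of the centralizer of a permutation of
`N` points with cycle type `m` (`Equiv.Perm.nat_card_centralizer`). -/
lemma padicValNat_lt_of_cycleType_sq {p N : ℕ} [hp : Fact p.Prime] {m : Multiset ℕ}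
    (hm : ∀ k ∈ m, k = p ∨ k = p ^ 2) (hsq : p ^ 2 ∈ m) (hN : m.sum ≤ N) :
    padicValNat p ((N - m.sum)! * m.prod * ∏ k ∈ m.toFinset, (m.count k)!) <
      padicValNat p N ! := by
  classical
  set a := m.count p
  set b := m.count (p ^ 2)
  have hp0 : 0 < p := hp.out.pos
  have hne : p ≠ p ^ 2 := (lt_self_pow₀ hp.out.one_lt one_lt_two).ne
  have hsub : m.toFinset ⊆ {p, p ^ 2} := fun k hk ↦ by simpa using hm k (by simpa using hk)
  have hsum : m.sum = p * a + p ^ 2 * b := by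
    rw [Finset.sum_multiset_count_of_subset m _ hsub, Finset.sum_pair hne, smul_eq_mul,
      smul_eq_mul, mul_comm a, mul_comm b]
  have hprod : m.prod = p ^ (a + 2 * b) := by
    rw [Finset.prod_multiset_count_of_subset m _ hsub, Finset.prod_pair hne, ← pow_mul, pow_add]
  have hcount : ∏ k ∈ m.toFinset, (m.count k)! = a ! * b ! := by
    rw [Finset.prod_subset hsub fun k _ hk ↦ by
      rw [Multiset.count_eq_zero_of_notMem (by simpa using hk), factorial_zero],
      Finset.prod_pair hne]
  have hb : 0 < b := Multiset.count_pos.mpr hsq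
  obtain ⟨f, rfl⟩ : ∃ f, N = f + m.sum := ⟨N - m.sum, by omega⟩
  rw [Nat.add_sub_cancel, hprod, hcount, hsum,
    padicValNat.mul (by positivity) (by positivity), padicValNat.mul (by positivity)
      (by positivity), padicValNat.mul (by positivity) (by positivity), padicValNat.prime_pow]
  have hf := padicValNat_factorial_add_le p f (p * a + p ^ 2 * b)
  have hab := padicValNat_factorial_add_le p (p * a) (p ^ 2 * b)
  rw [padicValNat_factorial_mul, padicValNat_factorial_sq_mul] at hab
  have : 2 * b ≤ p * b := Nat.mul_le_mul_right b hp.out.two_le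
  omega

namespace Equiv.Perm

variable {α : Type*} [Fintype α] [DecidableEq α] {p : ℕ} {g : Perm α}

lemma mem_cycleType_of_orderOf_eq_sq (hp : p.Prime) (hg : orderOf g = p ^ 2) {k : ℕ}
    (hk : k ∈ g.cycleType) : k = p ∨ k = p ^ 2 := by
  obtain ⟨i, hi, rfl⟩ := (Nat.dvd_prime_pow hp).mp (hg ▸ dvd_of_mem_cycleType hk)
  have : i ≠ 0 := by rintro rfl; exact (one_lt_of_mem_cycleType hk).ne' (pow_zero p)
  interval_cases i <;> simp_all

lemma sq_mem_cycleType_of_orderOf_eq_sq (hp : p.Prime) (hg : orderOf g = p ^ 2) :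
    p ^ 2 ∈ g.cycleType := by
  by_contra h
  have hdvd : orderOf g ∣ p := by
    rw [← lcm_cycleType, Multiset.lcm_dvd]
    intro k hk
    rcases mem_cycleType_of_orderOf_eq_sq hp hg hk with rfl | rfl
    exacts [dvd_rfl, absurd hk h]
  rw [hg] at hdvd
  exact absurd (Nat.le_of_dvd hp.pos hdvd) (not_le.mpr (lt_self_pow₀ hp.one_lt one_lt_two))

lemma padicValNat_card_centralizer_lt [Fact p.Prime] (hg : orderOf g = p ^ 2) :
    padicValNat p (Nat.card (centralizer {g})) < padicValNat p (Fintype.card α)! := by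
  rw [nat_card_centralizer]
  exact padicValNat_lt_of_cycleType_sq (fun _ ↦ mem_cycleType_of_orderOf_eq_sq Fact.out hg)
    (sq_mem_cycleType_of_orderOf_eq_sq Fact.out hg) (sum_cycleType_le g)

end Equiv.Perm

lemma Sylow.not_le_centralizer_of_orderOf_eq_sq {α : Type*} [Finite α] {p : ℕ}
    [hp : Fact p.Prime] (S : Sylow p (Perm α)) {g : Perm α} (hg : orderOf g = p ^ 2) :
    ¬ (S : Subgroup (Perm α)) ≤ centralizer {g} := by
  classical
  have := Fintype.ofFinite α
  intro hS
  have hdvd := card_dvd_of_le hS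
  rw [S.card_eq_multiplicity, Nat.card_perm, Nat.card_eq_fintype_card,
    Nat.factorization_def _ hp.out, padicValNat_dvd_iff_le Nat.card_pos.ne'] at hdvd
  exact (Perm.padicValNat_card_centralizer_lt hg).not_ge hdvd

lemma alternatingGroup.index_dvd_two (α : Type*) [Fintype α] [DecidableEq α] :
    (alternatingGroup α).index ∣ 2 := by
  rcases subsingleton_or_nontrivial α with _ | _
  · simp [alternatingGroup.index_eq_one]
  · simp [alternatingGroup.index_eq_two]

lemma Sylow.not_le_centralizer_alternatingGroup {α : Type*} [Fintype α] [DecidableEq α]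
    {p : ℕ} [hp : Fact p.Prime] (hodd : Odd p) (P : Sylow p (alternatingGroup α))
    {g : alternatingGroup α} (hg : orderOf g = p ^ 2) :
    ¬ (P : Subgroup (alternatingGroup α)) ≤ centralizer {g} := by
  have hindex : ¬ p ∣ (P.map (alternatingGroup α).subtype).index := by
    rw [index_map_subtype]
    refine hp.out.not_dvd_mul P.not_dvd_index fun h ↦ ?_
    have h2 := (Nat.prime_dvd_prime_iff_eq hp.out prime_two).mp
      (h.trans (alternatingGroup.index_dvd_two α))
    exact Nat.not_odd_iff_even.mpr (h2 ▸ even_two) hodd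
  intro hP
  refine ((P.2.map _).toSylow hindex).not_le_centralizer_of_orderOf_eq_sq
    (g := g) (by rwa [orderOf_coe]) ?_
  rintro _ ⟨y, hy, rfl⟩
  exact mem_centralizer_singleton_iff.mpr
    (congrArg Subtype.val (mem_centralizer_singleton_iff.mp (hP hy)))

lemma sq_dvd_orderOf_of_pow_ne_one {G : Type*} [Monoid G] {p k : ℕ} (hp : p.Prime) {x : G}
    (hx : x ^ p ^ k = 1) (hxp : x ^ p ≠ 1) : p ^ 2 ∣ orderOf x := by
  obtain ⟨i, -, hi⟩ := (Nat.dvd_prime_pow hp).mp (orderOf_dvd_of_pow_eq_one hx)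
  rw [hi]
  refine pow_dvd_pow p (not_lt.mp fun hi2 ↦ hxp ?_)
  rw [← orderOf_dvd_iff_pow_eq_one, hi]
  simpa using pow_dvd_pow p (Nat.lt_succ_iff.mp hi2)

lemma IsPGroup.pow_eq_one_of_mem_center {G : Type*} [Group G] {p : ℕ} (hp : p.Prime)
    {P : Subgroup G} (hP : IsPGroup p P)
    (h : ∀ g : G, orderOf g = p ^ 2 → ¬ P ≤ centralizer {g}) {z : P} (hz : z ∈ center P) :
    z ^ p = 1 := by
  by_contra hzp
  obtain ⟨k, hk⟩ := hP z
  have hne : orderOf z ≠ 0 :=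
    ne_zero_of_dvd_ne_zero (pow_ne_zero k hp.ne_zero) (orderOf_dvd_of_pow_eq_one hk)
  have hw := orderOf_pow_orderOf_div hne (sq_dvd_orderOf_of_pow_ne_one hp hk hzp)
  refine h _ (by rwa [orderOf_coe]) fun y hy ↦ mem_centralizer_singleton_iff.mpr ?_
  exact congrArg Subtype.val (mem_center_iff.mp (pow_mem hz _) ⟨y, hy⟩)

theorem stmt_12_general (n p : ℕ) (hp : p.Prime) (hodd : Odd p)
    (P : Sylow p (alternatingGroup (Fin n))) :
    (∀ z : (P : Subgroup (alternatingGroup (Fin n))),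
        z ∈ Subgroup.center (P : Subgroup (alternatingGroup (Fin n))) → z ^ p = 1) ∧
    ∀ x : alternatingGroup (Fin n), orderOf x = p ^ 2 →
      ¬ (∀ y ∈ (P : Subgroup (alternatingGroup (Fin n))), Commute x y) := by
  have : Fact p.Prime := ⟨hp⟩
  have key := fun g (hg : orderOf g = p ^ 2) ↦ P.not_le_centralizer_alternatingGroup hodd hg
  refine ⟨fun z ↦ P.2.pow_eq_one_of_mem_center hp key, fun x hx hcomm ↦ key x hx fun y hy ↦ ?_⟩
  exact mem_centralizer_singleton_iff.mpr (hcomm y hy).symm.eq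

theorem stmt_12 (n p : ℕ) (hp : p.Prime) (hodd : Odd p) (hp2 : p ^ 2 ≤ n)
    (P : Sylow p (alternatingGroup (Fin n))) :
    (∀ z : (P : Subgroup (alternatingGroup (Fin n))),
        z ∈ Subgroup.center (P : Subgroup (alternatingGroup (Fin n))) → z ^ p = 1) ∧
    ∀ x : alternatingGroup (Fin n), orderOf x = p ^ 2 →
      ¬ (∀ y ∈ (P : Subgroup (alternatingGroup (Fin n))), Commute x y) :=
  stmt_12_general n p hp hodd P
end

section
/- In the group PSL(2,q) with q = 2^l and 2^l − 1 prime, the image t of the unipotent matrix [[1,1],[0,1]] satisfies |t^{PSL(2,q)}| = 2^{2l} − 1. -/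
/-!
In characteristic 2 the centre of `SL(2, q)` is trivial, so `PSL(2, q) = SL(2, q)`, a group of
order `q (q² - 1)`. A matrix commuting with `t = [[1, 1], [0, 1]]` is upper triangular with equal
diagonal entries `a` satisfying `a² = 1`, hence `a = 1`; so the centraliser of `t` is the group of
the `q` matrices `[[1, b], [0, 1]]`, and the class of `t` has `q (q² - 1) / q = q² - 1` elements.
-/

open Matrix MulAction

section ConjAct

variable {G H : Type*} [Group G] [Group H]

lemma MulEquiv.orbit_conjAct_apply (e : G ≃* H) (g : G) :
    orbit (ConjAct H) (e g) = e '' orbit (ConjAct G) g := by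
  ext y
  simp only [ConjAct.mem_orbit_conjAct, Set.mem_image]
  constructor
  · intro h
    exact ⟨e.symm y, by simpa using e.symm.toMonoidHom.map_isConj h, e.apply_symm_apply y⟩
  · rintro ⟨x, hx, rfl⟩
    exact e.toMonoidHom.map_isConj hx

lemma MulEquiv.nat_card_orbit_conjAct_apply (e : G ≃* H) (g : G) :
    Nat.card (orbit (ConjAct H) (e g)) = Nat.card (orbit (ConjAct G) g) := by
  rw [e.orbit_conjAct_apply, Nat.card_image_of_injective e.injective]

lemma nat_card_orbit_conjAct_mul_nat_card_centralizer (g : G) :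
    Nat.card (orbit (ConjAct G) g) * Nat.card (Subgroup.centralizer {g}) = Nat.card G := by
  rw [Subgroup.nat_card_centralizer_nat_card_stabilizer, Nat.card_coe_set_eq,
    ← index_stabilizer, Subgroup.index_mul_card]
  exact Nat.card_congr ConjAct.ofConjAct.toEquiv

end ConjAct

namespace Matrix.SpecialLinearGroup

lemma nat_card_mul_nat_card_units (n R : Type*) [Fintype n] [DecidableEq n] [Nonempty n]
    [CommRing R] : Nat.card (SpecialLinearGroup n R) * Nat.card Rˣ = Nat.card (GL n R) := by
  rw [← GeneralLinearGroup.det.ker.card_mul_index, Subgroup.index_ker,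
    MonoidHom.range_eq_top.2 GeneralLinearGroup.det_surjective, Subgroup.card_top,
    ← Nat.card_range_of_injective toGL_injective, range_toGL]
  rfl

lemma nat_card_fin_two (F : Type*) [Field F] [Finite F] :
    Nat.card (SpecialLinearGroup (Fin 2) F) = Nat.card F * (Nat.card F ^ 2 - 1) := by
  cases nonempty_fintype F
  have hq : 1 < Fintype.card F := Fintype.one_lt_card
  have h := nat_card_mul_nat_card_units (Fin 2) F
  rw [card_GL_field, Fin.prod_univ_two, Nat.card_units, Nat.card_eq_fintype_card (α := F)] at h
  rw [Nat.card_eq_fintype_card (α := F)]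
  refine Nat.eq_of_mul_eq_mul_right (Nat.sub_pos_of_lt hq) (h.trans ?_)
  simp only [Fin.val_zero, Fin.val_one, pow_zero, pow_one, sq, ← Nat.mul_sub_one]
  ring

variable {R : Type*} [CommRing R]

def unitriangular (b : R) : SpecialLinearGroup (Fin 2) R :=
  ⟨!![1, b; 0, 1], by simp [det_fin_two_of]⟩

@[simp]
lemma coe_unitriangular (b : R) : (unitriangular b : Matrix (Fin 2) (Fin 2) R) = !![1, b; 0, 1] :=
  rfl

lemma unitriangular_injective : Function.Injective (unitriangular (R := R)) :=
  fun b c h ↦ by simpa using congrFun (congrFun (congrArg Subtype.val h) 0) 1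

variable [NoZeroDivisors R] [CharP R 2]

lemma center_fin_two_eq_bot : Subgroup.center (SpecialLinearGroup (Fin 2) R) = ⊥ := by
  refine (Subgroup.eq_bot_iff_forall _).2 fun A hA ↦ ?_
  obtain ⟨r, hr, hrA⟩ := mem_center_iff.1 hA
  obtain rfl : r = 1 := CharTwo.sq_injective (by simpa using hr)
  ext : 1
  simp [← hrA]

lemma centralizer_unitriangular_one :
    (Subgroup.centralizer {unitriangular (1 : R)} : Set (SpecialLinearGroup (Fin 2) R)) =
      Set.range unitriangular := by
  ext M
  simp only [SetLike.mem_coe, Subgroup.mem_centralizer_singleton_iff, Set.mem_range]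
  constructor
  · intro h
    have h' := congrArg Subtype.val h
    rw [coe_mul, coe_mul, coe_unitriangular] at h'
    have hc := congrFun (congrFun h' 0) 0
    have hd' := congrFun (congrFun h' 0) 1
    simp only [Fin.isValue, mul_apply, of_apply, cons_val', cons_val_zero, cons_val_fin_one,
      Fin.sum_univ_two, mul_one, cons_val_one, mul_zero, add_zero, one_mul, left_eq_add] at hc hd'
    have hd : (M : Matrix (Fin 2) (Fin 2) R) 1 1 = M 0 0 := by linear_combination -hd'
    have ha : (M : Matrix (Fin 2) (Fin 2) R) 0 0 = 1 := CharTwo.sq_injective <| by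
      linear_combination (det_fin_two (M : Matrix (Fin 2) (Fin 2) R)).symm.trans M.2
        + (M : Matrix (Fin 2) (Fin 2) R) 0 1 * hc - (M : Matrix (Fin 2) (Fin 2) R) 0 0 * hd
    refine ⟨(M : Matrix (Fin 2) (Fin 2) R) 0 1, Subtype.ext ?_⟩
    ext i j
    fin_cases i <;> fin_cases j <;> simp [hc, hd, ha]
  · rintro ⟨b, rfl⟩
    ext : 1
    simp [add_comm]

lemma nat_card_centralizer_unitriangular_one :
    Nat.card (Subgroup.centralizer {unitriangular (1 : R)}) = Nat.card R := by
  rw [← SetLike.coe_sort_coe, centralizer_unitriangular_one,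
    Nat.card_range_of_injective unitriangular_injective]

end Matrix.SpecialLinearGroup

lemma Matrix.ProjectiveSpecialLinearGroup.nat_card_orbit_conjAct_coe {n R : Type*} [Fintype n]
    [DecidableEq n] [CommRing R] (hcenter : Subgroup.center (SpecialLinearGroup n R) = ⊥)
    (A : SpecialLinearGroup n R) :
    Nat.card (orbit (ConjAct (ProjectiveSpecialLinearGroup n R))
        (A : ProjectiveSpecialLinearGroup n R)) =
      Nat.card (orbit (ConjAct (SpecialLinearGroup n R)) A) :=
  (MulEquiv.ofBijective (QuotientGroup.mk' _)
    ⟨(MonoidHom.ker_eq_bot_iff _).1 (by rw [QuotientGroup.ker_mk', hcenter]),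
      QuotientGroup.mk'_surjective _⟩).nat_card_orbit_conjAct_apply A

theorem stmt_15_general (l : ℕ) (hl : 2 ≤ l)
    (A : Matrix.SpecialLinearGroup (Fin 2) (GaloisField 2 l))
    (hA : (A : Matrix (Fin 2) (Fin 2) (GaloisField 2 l)) = !![1, 1; 0, 1]) :
    Nat.card (MulAction.orbit
        (ConjAct (Matrix.ProjectiveSpecialLinearGroup (Fin 2) (GaloisField 2 l)))
        ((A : Matrix.ProjectiveSpecialLinearGroup (Fin 2) (GaloisField 2 l)))) =
      2 ^ (2 * l) - 1 := by
  have hq : Nat.card (GaloisField 2 l) = 2 ^ l := GaloisField.card 2 l (by omega)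
  obtain rfl : A = SpecialLinearGroup.unitriangular 1 := Subtype.ext hA
  have h := nat_card_orbit_conjAct_mul_nat_card_centralizer
    (SpecialLinearGroup.unitriangular (1 : GaloisField 2 l))
  rw [SpecialLinearGroup.nat_card_centralizer_unitriangular_one,
    SpecialLinearGroup.nat_card_fin_two, hq, mul_comm] at h
  rw [ProjectiveSpecialLinearGroup.nat_card_orbit_conjAct_coe
    SpecialLinearGroup.center_fin_two_eq_bot, pow_mul']
  exact Nat.eq_of_mul_eq_mul_left (by positivity) h

theorem stmt_15 (l : ℕ) (hl : 2 ≤ l) (hprime : Nat.Prime (2 ^ l - 1))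
    (A : Matrix.SpecialLinearGroup (Fin 2) (GaloisField 2 l))
    (hA : (A : Matrix (Fin 2) (Fin 2) (GaloisField 2 l)) = !![1, 1; 0, 1]) :
    Nat.card (MulAction.orbit
        (ConjAct (Matrix.ProjectiveSpecialLinearGroup (Fin 2) (GaloisField 2 l)))
        ((A : Matrix.ProjectiveSpecialLinearGroup (Fin 2) (GaloisField 2 l)))) =
      2 ^ (2 * l) - 1 :=
  stmt_15_general l hl A hA
end
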